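/- Let f : ℝⁿ → ℝ be differentiable with L-Lipschitz gradient and bounded below by f̄, and let φ : ℝⁿ → (−∞,∞] be proper, lower semicontinuous, τ-weakly convex, bounded below by φ̄ on dom φ, and satisfy φ(x) − φ(y) ≤ L_φ‖x−y‖ for all x, y ∈ dom φ. Set ψ = f + φ, ψ̄ = f̄ + φ̄, and let θ ∈ (0, 1/((4/3)L + τ)). Then for all x ∈ dom φ, f(x) − f̄ ≤ 2(env_{θψ}(x) − ψ̄) + L_φ² θ, where env_{θψ}(x) := min_y ψ(y) + (1/(2θ))‖x−y‖². -/

import Mathlib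

noncomputable section

/-- `h` is proper: it never takes the value −∞ and is finite somewhere. -/
def ProperFn {n : ℕ} (h : EuclideanSpace ℝ (Fin n) → EReal) : Prop :=
  (∀ z, h z ≠ ⊥) ∧ ∃ z, h z ≠ ⊤

/-- `h` is τ-weakly convex: h + (τ/2)‖·‖² is convex on the domain of `h`. -/
def WeaklyConvex {n : ℕ} (τ : ℝ) (h : EuclideanSpace ℝ (Fin n) → EReal) : Prop :=
  ∀ x y : EuclideanSpace ℝ (Fin n), h x ≠ ⊤ → h y ≠ ⊤ → ∀ t : ℝ, 0 ≤ t → t ≤ 1 →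
    h (t • x + (1 - t) • y) + (((τ/2) * ‖t • x + (1 - t) • y‖ ^ 2 : ℝ) : EReal)
      ≤ (t : EReal) * (h x + (((τ/2) * ‖x‖ ^ 2 : ℝ) : EReal))
        + ((1 - t : ℝ) : EReal) * (h y + (((τ/2) * ‖y‖ ^ 2 : ℝ) : EReal))

local notation "⟪" a ", " b "⟫" => inner (𝕜 := ℝ) a b

/-- Descent lemma: quadratic upper bound for a function with Lipschitz gradient. -/
lemma descent_aux {n : ℕ} (f : EuclideanSpace ℝ (Fin n) → ℝ) (L : ℝ)
    (hdiff : Differentiable ℝ f)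
    (hgrad : ∀ u v, ‖gradient f u - gradient f v‖ ≤ L * ‖u - v‖)
    (u v : EuclideanSpace ℝ (Fin n)) :
    f v ≤ f u + ⟪gradient f u, v - u⟫ + L/2 * ‖v - u‖^2 := by
  set w := v - u with hw
  set g : ℝ → ℝ := fun s => f (u + s • w) - s * ⟪gradient f u, w⟫ - L/2 * s^2 * ‖w‖^2 with hg
  have hgd : ∀ s : ℝ, HasDerivAt g
      (⟪gradient f (u + s • w), w⟫ - ⟪gradient f u, w⟫ - L * s * ‖w‖^2) s := by
    intro s
    have hc : HasDerivAt (fun s : ℝ => u + s • w) w s := by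
      simpa using ((hasDerivAt_id s).smul_const w).const_add u
    have hf : HasDerivAt (fun s : ℝ => f (u + s • w)) (⟪gradient f (u + s • w), w⟫) s := by
      have := ((hdiff (u + s • w)).hasGradientAt.hasFDerivAt).comp_hasDerivAt s hc
      exact this
    have h2 : HasDerivAt (fun s : ℝ => s * ⟪gradient f u, w⟫) (⟪gradient f u, w⟫) s := by
      simpa using (hasDerivAt_id s).mul_const (⟪gradient f u, w⟫)
    have h3 : HasDerivAt (fun s : ℝ => L/2 * s^2 * ‖w‖^2) (L * s * ‖w‖^2) s := by
      have := ((hasDerivAt_pow 2 s).const_mul (L/2)).mul_const (‖w‖^2)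
      refine this.congr_deriv ?_
      simp only [Nat.cast_ofNat, show (2:ℕ) - 1 = 1 from rfl, pow_one]
      ring
    exact (hf.sub h2).sub h3
  have hanti : AntitoneOn g (Set.Icc (0:ℝ) 1) := by
    apply antitoneOn_of_deriv_nonpos (convex_Icc 0 1)
    · exact fun s _ => (hgd s).differentiableAt.continuousAt.continuousWithinAt
    · intro s _
      exact (hgd s).differentiableAt.differentiableWithinAt
    · intro s hs
      rw [interior_Icc] at hs
      rw [(hgd s).deriv]
      have h1 : ⟪gradient f (u + s • w) - gradient f u, w⟫ ≤ L * s * ‖w‖^2 := by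
        calc ⟪gradient f (u + s • w) - gradient f u, w⟫
            ≤ ‖gradient f (u + s • w) - gradient f u‖ * ‖w‖ := real_inner_le_norm _ _
          _ ≤ (L * ‖(u + s • w) - u‖) * ‖w‖ := by
              apply mul_le_mul_of_nonneg_right (hgrad _ _) (norm_nonneg _)
          _ = L * s * ‖w‖^2 := by
              rw [add_sub_cancel_left, norm_smul]
              simp [abs_of_nonneg hs.1.le]
              ring
      have h2 : ⟪gradient f (u + s • w) - gradient f u, w⟫
          = ⟪gradient f (u + s • w), w⟫ - ⟪gradient f u, w⟫ := by
        rw [inner_sub_left]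
      linarith [h1, h2.symm.le]
  have := hanti (Set.left_mem_Icc.2 zero_le_one) (Set.right_mem_Icc.2 zero_le_one) zero_le_one
  simp only [hg] at this
  simp only [zero_smul, add_zero, one_smul] at this
  have hv : u + w = v := by rw [hw]; abel
  rw [hv] at this
  nlinarith [this]

/-- Gradient norm bound for a lower-bounded function with Lipschitz gradient. -/
lemma gradsq_aux {n : ℕ} (f : EuclideanSpace ℝ (Fin n) → ℝ) (L fbar : ℝ) (hL : 0 < L)
    (hdiff : Differentiable ℝ f)
    (hgrad : ∀ u v, ‖gradient f u - gradient f v‖ ≤ L * ‖u - v‖)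
    (hfb : ∀ x, fbar ≤ f x) (z : EuclideanSpace ℝ (Fin n)) :
    ‖gradient f z‖^2 ≤ 2 * L * (f z - fbar) := by
  set g := gradient f z with hgdef
  have hkey := descent_aux f L hdiff hgrad z (z - L⁻¹ • g)
  have hsub : (z - L⁻¹ • g) - z = -(L⁻¹ • g) := by abel
  rw [hsub] at hkey
  have hin : ⟪g, -(L⁻¹ • g)⟫ = -(L⁻¹ * ‖g‖^2) := by
    rw [inner_neg_right, real_inner_smul_right, real_inner_self_eq_norm_sq]
  have hn : ‖-(L⁻¹ • g)‖^2 = L⁻¹^2 * ‖g‖^2 := by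
    rw [norm_neg, norm_smul, norm_inv, Real.norm_eq_abs, abs_of_pos hL]
    ring
  rw [hin, hn] at hkey
  have hfbz := hfb (z - L⁻¹ • g)
  have hLinv : L * L⁻¹ = 1 := mul_inv_cancel₀ hL.ne'
  have heq : L/2 * (L⁻¹^2 * ‖g‖^2) = L⁻¹ * ‖g‖^2 / 2 := by
    field_simp
  have h5 : L⁻¹ * ‖g‖^2 ≤ 2 * (f z - fbar) := by linarith [hkey, hfbz, heq]
  have h6 : ‖g‖^2 = L * (L⁻¹ * ‖g‖^2) := by
    field_simp
  calc ‖g‖^2 = L * (L⁻¹ * ‖g‖^2) := h6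
    _ ≤ L * (2 * (f z - fbar)) := mul_le_mul_of_nonneg_left h5 hL.le
    _ = 2 * L * (f z - fbar) := by ring

/-- Lemma E.3: f(x) − f̄ ≤ 2(env_{θψ}(x) − ψ̄) + L_φ²θ on dom φ, where ψ = f + φ. -/
theorem stmt_12 {n : ℕ} (f : EuclideanSpace ℝ (Fin n) → ℝ)
    (φ : EuclideanSpace ℝ (Fin n) → EReal)
    (L τ Lφ fbar φbar θ : ℝ)
    (hL : 0 < L) (hτ : 0 < τ) (hLφ : 0 < Lφ)
    (hdiff : Differentiable ℝ f)
    (hgrad : ∀ u v, ‖gradient f u - gradient f v‖ ≤ L * ‖u - v‖)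
    (hfb : ∀ x, fbar ≤ f x)
    (hproper : ProperFn φ) (hlsc : LowerSemicontinuous φ)
    (hwc : WeaklyConvex τ φ)
    (hφb : ∀ x, φ x ≠ ⊤ → (φbar : EReal) ≤ φ x)
    (hφLip : ∀ x y, φ x ≠ ⊤ → φ y ≠ ⊤ → φ x ≤ φ y + ((Lφ * ‖x - y‖ : ℝ) : EReal))
    (hθ : 0 < θ) (hθ' : θ < 1/((4/3)*L + τ))
    (x : EuclideanSpace ℝ (Fin n)) (hx : φ x ≠ ⊤) :
    ((f x - fbar : ℝ) : EReal)
      ≤ ((2 : ℝ) : EReal) *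
          ((⨅ z : EuclideanSpace ℝ (Fin n),
              ((f z : ℝ) : EReal) + φ z + (((1/(2*θ)) * ‖x - z‖ ^ 2 : ℝ) : EReal))
            - ((fbar + φbar : ℝ) : EReal))
        + ((Lφ ^ 2 * θ : ℝ) : EReal) := by
  -- the lower-bound constant
  set c : ℝ := fbar + φbar + (f x - fbar - Lφ^2*θ)/2 with hc
  -- θ is small: L*θ ≤ 3/4
  have hLθ : L * θ ≤ 3/4 := by
    have hpos : 0 < (4/3)*L + τ := by positivity
    have h1 : θ * ((4/3)*L + τ) < 1 := (lt_div_iff₀ hpos).mp hθ'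
    nlinarith [mul_pos hτ hθ]
  -- per-point lower bound
  have hptwise : ∀ z : EuclideanSpace ℝ (Fin n),
      (c : EReal) ≤ ((f z : ℝ) : EReal) + φ z + (((1/(2*θ)) * ‖x - z‖ ^ 2 : ℝ) : EReal) := by
    intro z
    by_cases hzt : φ z = ⊤
    · rw [hzt, EReal.coe_add_top, EReal.top_add_of_ne_bot (EReal.coe_ne_bot _)]
      exact le_top
    · obtain ⟨p, hp⟩ : ∃ p : ℝ, φ z = (p : EReal) :=
        ⟨(φ z).toReal, (EReal.coe_toReal hzt (hproper.1 z)).symm⟩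
      obtain ⟨px, hpx⟩ : ∃ p : ℝ, φ x = (p : EReal) :=
        ⟨(φ x).toReal, (EReal.coe_toReal hx (hproper.1 x)).symm⟩
      set t : ℝ := ‖x - z‖ with ht
      -- real facts
      have ht0 : 0 ≤ t := norm_nonneg _
      have hpb : φbar ≤ p := by
        have := hφb z hzt
        rw [hp] at this
        exact_mod_cast this
      have hpxb : φbar ≤ px := by
        have := hφb x hx
        rw [hpx] at this
        exact_mod_cast this
      have hLip : px ≤ p + Lφ * t := by
        have := hφLip x z hx hzt
        rw [hp, hpx, ← EReal.coe_add] at this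
        exact_mod_cast this
      -- key1 : f x - fbar ≤ 2*(f z - fbar) + L*t^2
      have hA := descent_aux f L hdiff hgrad z x
      have hCS : ⟪gradient f z, x - z⟫ ≤ ‖gradient f z‖ * t :=
        real_inner_le_norm _ _
      have hGN := gradsq_aux f L fbar hL hdiff hgrad hfb z
      have hAM : ‖gradient f z‖ * t ≤ ‖gradient f z‖^2/(2*L) + L/2 * t^2 := by
        rw [div_add' _ _ _ (by positivity : (2*L : ℝ) ≠ 0), le_div_iff₀ (by positivity : (0:ℝ) < 2*L)]
        nlinarith [sq_nonneg (‖gradient f z‖ - L*t)]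
      have key1 : f x - fbar ≤ 2*(f z - fbar) + L*t^2 := by
        have hdiv : ‖gradient f z‖^2/(2*L) ≤ f z - fbar := by
          rw [div_le_iff₀ (by positivity : (0:ℝ) < 2*L)]
          linarith [hGN]
        linarith [hA, hCS, hAM, hdiv]
      -- key2 : L*t^2 ≤ (3/2)*(1/(2*θ))*t^2
      have hLa : L ≤ (3/2)*(1/(2*θ)) := by
        rw [mul_one_div, le_div_iff₀ (by positivity : (0:ℝ) < 2*θ)]
        nlinarith
      have key2 : L*t^2 ≤ (3/2)*(1/(2*θ))*t^2 :=
        mul_le_mul_of_nonneg_right hLa (sq_nonneg t)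
      -- key3 : 0 ≤ (1/2)*(1/(2*θ))*t^2 - Lφ*t + Lφ^2*θ
      have key3 : 0 ≤ (1/2)*(1/(2*θ))*t^2 - Lφ*t + Lφ^2*θ := by
        have h := div_nonneg (sq_nonneg (t - 2*Lφ*θ)) (le_of_lt (by positivity : (0:ℝ) < 4*θ))
        have he : (t - 2*Lφ*θ)^2 / (4*θ) = (1/2)*(1/(2*θ))*t^2 - Lφ*t + Lφ^2*θ := by
          field_simp
          ring
        linarith [he ▸ h]
      -- the real inequality
      have hreal : c ≤ f z + p + (1/(2*θ)) * t^2 := by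
        rw [hc]
        linarith [key1, key2, key3, hpb, hpxb, hLip]
      rw [hp, ← EReal.coe_add, ← EReal.coe_add]
      exact_mod_cast hreal
  -- pass to the infimum
  set I : EReal := ⨅ z : EuclideanSpace ℝ (Fin n),
      ((f z : ℝ) : EReal) + φ z + (((1/(2*θ)) * ‖x - z‖ ^ 2 : ℝ) : EReal) with hI
  have hinf : (c : EReal) ≤ I := le_iInf hptwise
  have hIbot : I ≠ ⊥ := fun h => by
    rw [h] at hinf
    exact (EReal.coe_ne_bot c) (le_bot_iff.mp hinf)
  by_cases hItop : I = ⊤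
  · rw [hItop, EReal.top_sub_coe, EReal.mul_top_of_pos (by norm_num), EReal.top_add_of_ne_bot]
    · exact le_top
    · exact EReal.coe_ne_bot _
  · obtain ⟨r, hr⟩ : ∃ r : ℝ, I = (r : EReal) := ⟨I.toReal, (EReal.coe_toReal hItop hIbot).symm⟩
    have hcr : c ≤ r := by
      rw [hr] at hinf
      exact_mod_cast hinf
    rw [hr, ← EReal.coe_sub, ← EReal.coe_mul, ← EReal.coe_add]
    apply EReal.coe_le_coe_iff.mpr
    rw [hc] at hcr
    linarith
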